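/- (Theorem 3, feasibility part.) Under the path setup of Theorem 3 — index sets A_0, …, A_K each with G_{A_l} of full row rank, consecutive sets differing by adding or removing one constraint j_l, and update quantities c_l ∈ ℝ, v_l ∈ ℝⁿ, f_l ∈ ℝ^m, d̃_l ∈ ℝ^{n_c} (with d̃_l taken as in Theorem 1 for an addition and as its negative for a removal) — the following identities hold for every θ ∈ ℝⁿ: (i) G z_{A_K}(θ) − b − Sθ = (G z_{A_0}(θ) − b − Sθ) + Σ_{l=1}^{K} (G f_l)(c_l + v_lᵀθ) in ℝ^{n_c}, and (ii) λ̃_{A_K}(θ) = λ̃_{A_0}(θ) − Σ_{l=1}^{K} d̃_l (c_l + v_lᵀθ) in ℝ^{n_c}. Consequently, θ satisfies G z_{A_K}(θ) ≤ b + Sθ and λ_{A_K}(θ) ≥ 0 if and only if, for every k ∉ A_K, the k-th component of (G z_{A_0}(θ) − b − Sθ) + Σ_l (G f_l)(c_l + v_lᵀθ) is ≤ 0, and for every k ∈ A_K, the k-th component of −λ̃_{A_0}(θ) + Σ_l d̃_l (c_l + v_lᵀθ) is ≤ 0. -/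

import Mathlib

open Matrix

noncomputable section
namespace MpQP

/-- Submatrix of the rows of `G` indexed by the finite index set `A`. -/
def subRows {nc p : ℕ} (G : Matrix (Fin nc) (Fin p) ℝ) (A : Finset (Fin nc)) :
    Matrix A (Fin p) ℝ := Matrix.of fun i k => G i.val k

/-- Subvector of `b` indexed by `A`. -/
def subVec {nc : ℕ} (b : Fin nc → ℝ) (A : Finset (Fin nc)) : A → ℝ := fun i => b i.val

/-- `G_A` has full row rank, i.e. the rows of `G` indexed by `A` are linearly independent. -/
def FullRowRank {nc m : ℕ} (G : Matrix (Fin nc) (Fin m) ℝ) (A : Finset (Fin nc)) : Prop :=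
  LinearIndependent ℝ (fun i : A => G i.val)

/-- The parametric dual solution `λ_A(θ) = −(G_A H⁻¹ G_Aᵀ)⁻¹ (b_A + S_A θ)`. -/
def lamOf {m n nc : ℕ} (H : Matrix (Fin m) (Fin m) ℝ) (G : Matrix (Fin nc) (Fin m) ℝ)
    (b : Fin nc → ℝ) (S : Matrix (Fin nc) (Fin n) ℝ) (A : Finset (Fin nc))
    (θ : Fin n → ℝ) : A → ℝ :=
  -((subRows G A * H⁻¹ * (subRows G A)ᵀ)⁻¹.mulVec
      (fun i => b i.val + S.mulVec θ i.val))

/-- The parametric primal solution `z_A(θ) = −H⁻¹ G_Aᵀ λ_A(θ)`. -/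
def zOf {m n nc : ℕ} (H : Matrix (Fin m) (Fin m) ℝ) (G : Matrix (Fin nc) (Fin m) ℝ)
    (b : Fin nc → ℝ) (S : Matrix (Fin nc) (Fin n) ℝ) (A : Finset (Fin nc))
    (θ : Fin n → ℝ) : Fin m → ℝ :=
  -((H⁻¹ * (subRows G A)ᵀ).mulVec (lamOf H G b S A θ))

/-- `λ̃_A(θ) ∈ ℝ^{n_c}`: the dual solution extended by zeros outside `A`. -/
def lamExt {m n nc : ℕ} (H : Matrix (Fin m) (Fin m) ℝ) (G : Matrix (Fin nc) (Fin m) ℝ)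
    (b : Fin nc → ℝ) (S : Matrix (Fin nc) (Fin n) ℝ) (A : Finset (Fin nc))
    (θ : Fin n → ℝ) : Fin nc → ℝ :=
  fun k => if h : k ∈ A then lamOf H G b S A θ ⟨k, h⟩ else 0

/-- `W = G_A H⁻¹ G_Aᵀ`. -/
def Wmat {m nc : ℕ} (H : Matrix (Fin m) (Fin m) ℝ) (G : Matrix (Fin nc) (Fin m) ℝ)
    (A : Finset (Fin nc)) : Matrix A A ℝ :=
  subRows G A * H⁻¹ * (subRows G A)ᵀ

/-- `w = G_A H⁻¹ G_jᵀ`. -/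
def wvec {m nc : ℕ} (H : Matrix (Fin m) (Fin m) ℝ) (G : Matrix (Fin nc) (Fin m) ℝ)
    (A : Finset (Fin nc)) (j : Fin nc) : A → ℝ :=
  (subRows G A * H⁻¹).mulVec (G j)

/-- `w₀ = G_j H⁻¹ G_jᵀ`. -/
def w0 {m nc : ℕ} (H : Matrix (Fin m) (Fin m) ℝ) (G : Matrix (Fin nc) (Fin m) ℝ)
    (j : Fin nc) : ℝ :=
  G j ⬝ᵥ H⁻¹.mulVec (G j)

/-- The Schur complement `C = w₀ − wᵀ W⁻¹ w`. -/
def Cval {m nc : ℕ} (H : Matrix (Fin m) (Fin m) ℝ) (G : Matrix (Fin nc) (Fin m) ℝ)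
    (A : Finset (Fin nc)) (j : Fin nc) : ℝ :=
  w0 H G j - wvec H G A j ⬝ᵥ (Wmat H G A)⁻¹.mulVec (wvec H G A j)

/-- `c_j = C⁻¹ (wᵀ W⁻¹ b_A − b_j)`. -/
def cVal {m nc : ℕ} (H : Matrix (Fin m) (Fin m) ℝ) (G : Matrix (Fin nc) (Fin m) ℝ)
    (b : Fin nc → ℝ) (A : Finset (Fin nc)) (j : Fin nc) : ℝ :=
  (Cval H G A j)⁻¹ * (wvec H G A j ⬝ᵥ (Wmat H G A)⁻¹.mulVec (subVec b A) - b j)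

/-- `v_j = C⁻¹ (S_Aᵀ W⁻¹ w − S_jᵀ)`. -/
def vVec {m n nc : ℕ} (H : Matrix (Fin m) (Fin m) ℝ) (G : Matrix (Fin nc) (Fin m) ℝ)
    (S : Matrix (Fin nc) (Fin n) ℝ) (A : Finset (Fin nc)) (j : Fin nc) : Fin n → ℝ :=
  (Cval H G A j)⁻¹ •
    ((subRows S A)ᵀ.mulVec ((Wmat H G A)⁻¹.mulVec (wvec H G A j)) - S j)

/-- `d̃_j ∈ ℝ^{n_c}`: equal to `W⁻¹ w` on `A`, to `−1` at index `j`, and `0` elsewhere. -/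
def dExt {m nc : ℕ} (H : Matrix (Fin m) (Fin m) ℝ) (G : Matrix (Fin nc) (Fin m) ℝ)
    (A : Finset (Fin nc)) (j : Fin nc) : Fin nc → ℝ :=
  fun k =>
    if h : k ∈ A then (Wmat H G A)⁻¹.mulVec (wvec H G A j) ⟨k, h⟩
    else if k = j then -1 else 0

/-- `f_j = H⁻¹ G_{A ∪ {j}}ᵀ (d̃_j restricted to A ∪ {j})`. -/
def fVec {m nc : ℕ} (H : Matrix (Fin m) (Fin m) ℝ) (G : Matrix (Fin nc) (Fin m) ℝ)
    (A : Finset (Fin nc)) (j : Fin nc) : Fin m → ℝ :=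
  (H⁻¹ * (subRows G (insert j A))ᵀ).mulVec (fun i => dExt H G A j i.val)


variable {m n nc : ℕ} {H : Matrix (Fin m) (Fin m) ℝ} {G : Matrix (Fin nc) (Fin m) ℝ}
  {b : Fin nc → ℝ} {S : Matrix (Fin nc) (Fin n) ℝ}

lemma Wmat_apply (A : Finset (Fin nc)) (i k : A) :
    Wmat H G A i k = G i.val ⬝ᵥ H⁻¹.mulVec (G k.val) := by
  simp [Wmat, Matrix.mul_apply, subRows, dotProduct, mulVec, Finset.sum_mul, Finset.mul_sum]
  rw [Finset.sum_comm]
  simp [mul_assoc]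

lemma wvec_apply (A : Finset (Fin nc)) (j : Fin nc) (k : A) :
    wvec H G A j k = G k.val ⬝ᵥ H⁻¹.mulVec (G j) := by
  simp [wvec, Matrix.mul_apply, subRows, dotProduct, mulVec, Finset.sum_mul, Finset.mul_sum]
  rw [Finset.sum_comm]
  simp [mul_assoc]

lemma dot_symm (hH : H.PosDef) (x y : Fin m → ℝ) :
    x ⬝ᵥ H⁻¹.mulVec y = y ⬝ᵥ H⁻¹.mulVec x := by
  have hsym : (H⁻¹)ᵀ = H⁻¹ := by
    have h := hH.inv.1
    ext i k
    have := congrFun (congrFun h i) k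
    simpa [Matrix.conjTranspose_apply] using this
  rw [dotProduct_mulVec, ← mulVec_transpose, hsym, dotProduct_comm]

lemma Wmat_posDef (hH : H.PosDef) (A : Finset (Fin nc)) (hA : FullRowRank G A) :
    (Wmat H G A).PosDef := by
  have hHi : (H⁻¹).PosDef := hH.inv
  rw [posDef_iff_dotProduct_mulVec]
  constructor
  · have := Matrix.isHermitian_mul_mul_conjTranspose (subRows G A) hHi.1
    simpa [Wmat] using this
  · intro x hx
    have hy : (subRows G A)ᵀ.mulVec x ≠ 0 := by
      intro h0
      apply hx
      have := Fintype.linearIndependent_iff.1 hA x ?_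
      · funext i; exact this i
      · funext k
        have := congrFun h0 k
        simpa [mulVec, subRows, dotProduct, transpose_apply, mul_comm] using this
    have hpos := hHi.dotProduct_mulVec_pos hy
    simp only [star_trivial] at hpos ⊢
    have : x ⬝ᵥ (Wmat H G A).mulVec x =
        ((subRows G A)ᵀ.mulVec x) ⬝ᵥ H⁻¹.mulVec ((subRows G A)ᵀ.mulVec x) := by
      unfold Wmat
      rw [← mulVec_mulVec, ← mulVec_mulVec, dotProduct_mulVec, ← mulVec_transpose]
    simpa [this] using hpos

lemma Wmat_isUnit_det (hH : H.PosDef) (A : Finset (Fin nc)) (hA : FullRowRank G A) :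
    IsUnit (Wmat H G A).det :=
  isUnit_iff_ne_zero.2 (ne_of_gt (Wmat_posDef hH A hA).det_pos)

lemma FullRowRank.mono {A B : Finset (Fin nc)} (hB : FullRowRank G B) (hAB : A ⊆ B) :
    FullRowRank G A := by
  have : (fun i : A => G i.val) =
      (fun i : B => G i.val) ∘ (fun i : A => (⟨i.val, hAB i.2⟩ : B)) := rfl
  rw [FullRowRank, this]
  exact hB.comp _ (fun a b hab => by
    apply Subtype.ext
    simpa using congrArg Subtype.val hab)

lemma lamOf_def (A : Finset (Fin nc)) (θ : Fin n → ℝ) :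
    lamOf H G b S A θ =
      -((Wmat H G A)⁻¹.mulVec (fun i => b i.val + S.mulVec θ i.val)) := rfl

/-- `W λ = −(b_A + S_A θ)` -/
lemma Wmat_mulVec_lamOf (hH : H.PosDef) (A : Finset (Fin nc)) (hA : FullRowRank G A)
    (θ : Fin n → ℝ) :
    (Wmat H G A).mulVec (lamOf H G b S A θ) =
      fun i => -(b i.val + S.mulVec θ i.val) := by
  rw [lamOf_def, mulVec_neg, mulVec_mulVec,
    Matrix.mul_nonsing_inv _ (Wmat_isUnit_det hH A hA), one_mulVec]
  rfl

lemma Wmat_mulVec_inv (hH : H.PosDef) (A : Finset (Fin nc)) (hA : FullRowRank G A)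
    (x : A → ℝ) :
    (Wmat H G A).mulVec ((Wmat H G A)⁻¹.mulVec x) = x := by
  rw [mulVec_mulVec, Matrix.mul_nonsing_inv _ (Wmat_isUnit_det hH A hA), one_mulVec]

/-- Row formula for `W_B` times a restricted vector, `B = insert j A`. -/
lemma WB_row (A : Finset (Fin nc)) (j : Fin nc) (hj : j ∉ A) (x : Fin nc → ℝ)
    (i : (insert j A : Finset (Fin nc))) :
    (Wmat H G (insert j A)).mulVec (fun k => x k.val) i =
      (G i.val ⬝ᵥ H⁻¹.mulVec (G j)) * x j +
        ∑ k : A, (G i.val ⬝ᵥ H⁻¹.mulVec (G k.val)) * x k.val := by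
  have h1 : (Wmat H G (insert j A)).mulVec (fun k => x k.val) i =
      ∑ k ∈ insert j A, (G i.val ⬝ᵥ H⁻¹.mulVec (G k)) * x k := by
    rw [mulVec]
    simp only [dotProduct, Wmat_apply]
    exact Finset.sum_coe_sort _ (fun k => (G i.val ⬝ᵥ H⁻¹.mulVec (G k)) * x k)
  rw [h1, Finset.sum_insert hj]
  congr 1
  exact (Finset.sum_coe_sort _ (fun k => (G i.val ⬝ᵥ H⁻¹.mulVec (G k)) * x k)).symm

lemma sumA_mem (A : Finset (Fin nc)) {i : Fin nc} (hi : i ∈ A) (y : A → ℝ) :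
    ∑ k : A, (G i ⬝ᵥ H⁻¹.mulVec (G k.val)) * y k =
      (Wmat H G A).mulVec y ⟨i, hi⟩ := by
  rw [mulVec]
  simp only [dotProduct, Wmat_apply]

lemma sumA_j (hH : H.PosDef) (A : Finset (Fin nc)) (j : Fin nc) (y : A → ℝ) :
    ∑ k : A, (G j ⬝ᵥ H⁻¹.mulVec (G k.val)) * y k = wvec H G A j ⬝ᵥ y := by
  rw [dotProduct]
  refine Finset.sum_congr rfl fun k _ => ?_
  rw [wvec_apply, dot_symm hH]

lemma WB_dExt (hH : H.PosDef) (A : Finset (Fin nc)) (j : Fin nc) (hj : j ∉ A)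
    (hB : FullRowRank G (insert j A)) :
    (Wmat H G (insert j A)).mulVec (fun k => dExt H G A j k.val) =
      fun i => if i.val ∈ A then 0 else -(Cval H G A j) := by
  have hA : FullRowRank G A := hB.mono (Finset.subset_insert _ _)
  funext i
  rw [WB_row A j hj]
  have hdj : dExt H G A j j = -1 := by simp [dExt, hj]
  have hres : ∀ k : A, dExt H G A j k.val =
      (Wmat H G A)⁻¹.mulVec (wvec H G A j) k := by
    intro k; simp [dExt, k.2]
  rw [hdj]
  simp only [hres]
  by_cases hi : i.val ∈ A
  · rw [sumA_mem A hi, Wmat_mulVec_inv hH A hA, if_pos hi, wvec_apply]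
    ring
  · have hij : i.val = j := by
      rcases Finset.mem_insert.1 i.2 with h | h
      · exact h
      · exact absurd h hi
    rw [if_neg hi, hij, sumA_j hH, Cval, w0]
    ring

lemma Cval_pos (hH : H.PosDef) (A : Finset (Fin nc)) (j : Fin nc) (hj : j ∉ A)
    (hB : FullRowRank G (insert j A)) : 0 < Cval H G A j := by
  set B := insert j A with hBdef
  have hWB := Wmat_posDef hH B hB
  set ξ : B → ℝ := fun k => dExt H G A j k.val with hξ
  have hξ0 : ξ ≠ 0 := by
    intro h0
    have := congrFun h0 ⟨j, Finset.mem_insert_self j A⟩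
    simp [hξ, dExt, hj] at this
  have hpos := hWB.dotProduct_mulVec_pos hξ0
  simp only [star_trivial] at hpos
  have hval : ξ ⬝ᵥ (Wmat H G B).mulVec ξ = Cval H G A j := by
    rw [hξ, WB_dExt hH A j hj hB, dotProduct]
    have : ∑ i : B, dExt H G A j i.val *
        (if (i : Fin nc) ∈ A then 0 else -(Cval H G A j)) =
        ∑ i ∈ B, dExt H G A j i * (if i ∈ A then 0 else -(Cval H G A j)) :=
      Finset.sum_coe_sort _ (fun i => dExt H G A j i * (if i ∈ A then 0 else -(Cval H G A j)))
    rw [this, hBdef, Finset.sum_insert hj]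
    have h2 : ∑ i ∈ A, dExt H G A j i * (if i ∈ A then 0 else -(Cval H G A j)) = 0 :=
      Finset.sum_eq_zero fun x hx => by simp [hx]
    rw [h2]
    simp [dExt, hj]
  simpa [hval] using hpos

lemma dot_Winv_symm (hH : H.PosDef) (A : Finset (Fin nc)) (hA : FullRowRank G A)
    (x y : A → ℝ) :
    ((Wmat H G A)⁻¹.mulVec x) ⬝ᵥ y = x ⬝ᵥ ((Wmat H G A)⁻¹.mulVec y) := by
  have hsym : ((Wmat H G A)⁻¹)ᵀ = (Wmat H G A)⁻¹ := by
    rw [Matrix.transpose_nonsing_inv]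
    congr 1
    have h := (Wmat_posDef hH A hA).1
    ext i k
    have := congrFun (congrFun h i) k
    simpa [Matrix.conjTranspose_apply] using this
  rw [dotProduct_comm, dotProduct_mulVec, ← mulVec_transpose, hsym, dotProduct_comm]

lemma lamOf_insert (hH : H.PosDef) (A : Finset (Fin nc)) (j : Fin nc) (hj : j ∉ A)
    (hB : FullRowRank G (insert j A)) (θ : Fin n → ℝ) :
    lamOf H G b S (insert j A) θ = fun k =>
      lamExt H G b S A θ k.val -
        (cVal H G b A j + vVec H G S A j ⬝ᵥ θ) * dExt H G A j k.val := by
  have hA : FullRowRank G A := hB.mono (Finset.subset_insert _ _)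
  have hC : 0 < Cval H G A j := Cval_pos hH A j hj hB
  set t : ℝ := cVal H G b A j + vVec H G S A j ⬝ᵥ θ with ht
  set q : A → ℝ := (Wmat H G A)⁻¹.mulVec (wvec H G A j) with hq
  set μ : Fin nc → ℝ := fun k => lamExt H G b S A θ k - t * dExt H G A j k with hμ
  -- main computation : W_B μ|B = -(b + Sθ)|B
  have key : (Wmat H G (insert j A)).mulVec (fun k => μ k.val) =
      fun i => -(b i.val + S.mulVec θ i.val) := by
    funext i
    rw [WB_row A j hj]
    have hμj : μ j = t := by simp [hμ, lamExt, dExt, hj]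
    have hμA : ∀ k : A, μ k.val = (lamOf H G b S A θ - t • q) k := by
      intro k; simp [hμ, lamExt, dExt, k.2, hq]
    rw [hμj]
    simp only [hμA]
    by_cases hi : i.val ∈ A
    · rw [sumA_mem A hi, mulVec_sub, mulVec_smul, Wmat_mulVec_lamOf hH A hA,
        Wmat_mulVec_inv hH A hA]
      simp only [Pi.sub_apply, Pi.smul_apply, smul_eq_mul]
      rw [wvec_apply]
      ring
    · have hij : i.val = j := by
        rcases Finset.mem_insert.1 i.2 with h | h
        · exact h
        · exact absurd h hi
      rw [hij, sumA_j hH, dotProduct_sub, dotProduct_smul]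
      -- need : w0 * t + (w ⬝ λ - t * (w ⬝ q)) = -(b j + Sθ j)
      have hlam : wvec H G A j ⬝ᵥ lamOf H G b S A θ =
          -(wvec H G A j ⬝ᵥ (Wmat H G A)⁻¹.mulVec (fun i : A => b i.val + S.mulVec θ i.val)) := by
        rw [lamOf_def, dotProduct_neg]
      have hsplit : (fun i : A => b i.val + S.mulVec θ i.val) =
          subVec b A + (subRows S A).mulVec θ := by
        funext k
        simp [subVec, subRows, mulVec, dotProduct]
      have hCc : Cval H G A j * cVal H G b A j =
          wvec H G A j ⬝ᵥ (Wmat H G A)⁻¹.mulVec (subVec b A) - b j := by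
        rw [cVal, ← mul_assoc, mul_inv_cancel₀ (ne_of_gt hC), one_mul]
      have hCv : Cval H G A j * (vVec H G S A j ⬝ᵥ θ) =
          wvec H G A j ⬝ᵥ (Wmat H G A)⁻¹.mulVec ((subRows S A).mulVec θ) - S.mulVec θ j := by
        rw [vVec, smul_dotProduct, smul_eq_mul, ← mul_assoc, mul_inv_cancel₀ (ne_of_gt hC), one_mul,
          sub_dotProduct, mulVec_transpose, ← dotProduct_mulVec,
          dot_Winv_symm hH A hA]
        rfl
      have hw0 : G j ⬝ᵥ H⁻¹.mulVec (G j) = w0 H G j := rfl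
      rw [hlam, hsplit, mulVec_add, dotProduct_add, hw0]
      have hexp : w0 H G j * t = Cval H G A j * t +
          wvec H G A j ⬝ᵥ ((Wmat H G A)⁻¹.mulVec (wvec H G A j)) * t := by
        rw [Cval]; ring
      rw [hexp, ht, mul_add, hCc, hCv]
      simp only [hq, smul_eq_mul]
      ring
  -- conclude
  have hμB : (fun k : (insert j A : Finset (Fin nc)) => μ k.val) =
      lamOf H G b S (insert j A) θ := by
    have h1 : (fun k : (insert j A : Finset (Fin nc)) => μ k.val) =
        (Wmat H G (insert j A))⁻¹.mulVec
          ((Wmat H G (insert j A)).mulVec (fun k => μ k.val)) := by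
      rw [mulVec_mulVec, Matrix.nonsing_inv_mul _ (Wmat_isUnit_det hH _ hB), one_mulVec]
    rw [h1, key, lamOf_def]
    rw [show (fun i : (insert j A : Finset (Fin nc)) => -(b i.val + S.mulVec θ i.val)) =
      -(fun i : (insert j A : Finset (Fin nc)) => (b i.val + S.mulVec θ i.val)) from rfl,
      mulVec_neg]
  rw [← hμB]

lemma lamExt_insert (hH : H.PosDef) (A : Finset (Fin nc)) (j : Fin nc) (hj : j ∉ A)
    (hB : FullRowRank G (insert j A)) (θ : Fin n → ℝ) :
    lamExt H G b S (insert j A) θ = lamExt H G b S A θ -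
      (cVal H G b A j + vVec H G S A j ⬝ᵥ θ) • dExt H G A j := by
  funext k
  by_cases hk : k ∈ insert j A
  · simp only [lamExt, dif_pos hk, lamOf_insert hH A j hj hB θ]
    simp [lamExt]
  · have hk1 : k ∉ A := fun h => hk (Finset.mem_insert_of_mem h)
    have hk2 : k ≠ j := fun h => hk (h ▸ Finset.mem_insert_self j A)
    simp [lamExt, dExt, hk, hk1, hk2]

lemma ext_mulVec (s : Finset (Fin nc)) (x : Fin nc → ℝ) (hx : ∀ k, k ∉ s → x k = 0) :
    (H⁻¹ * (subRows G s)ᵀ).mulVec (fun k : s => x k.val) = (H⁻¹ * Gᵀ).mulVec x := by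
  funext a
  have hL : (H⁻¹ * (subRows G s)ᵀ).mulVec (fun k : s => x k.val) a =
      ∑ k ∈ s, (H⁻¹.mulVec (G k)) a * x k := by
    rw [mulVec]
    simp only [dotProduct, Matrix.mul_apply, subRows, transpose_apply, Matrix.of_apply,
      mulVec, dotProduct, Finset.sum_mul]
    exact Finset.sum_coe_sort _ (fun k => ∑ b', H⁻¹ a b' * G k b' * x k)
  have hR : (H⁻¹ * Gᵀ).mulVec x a = ∑ k : Fin nc, (H⁻¹.mulVec (G k)) a * x k := by
    rw [mulVec]
    simp only [dotProduct, Matrix.mul_apply, transpose_apply, mulVec, Finset.sum_mul]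
  rw [hL, hR]
  exact Finset.sum_subset (f := fun k => (H⁻¹.mulVec (G k)) a * x k)
    (Finset.subset_univ s) fun k _ hk => by simp only [hx k hk, mul_zero]

lemma zOf_eq (A : Finset (Fin nc)) (θ : Fin n → ℝ) :
    zOf H G b S A θ = -((H⁻¹ * Gᵀ).mulVec (lamExt H G b S A θ)) := by
  rw [zOf]
  rw [← ext_mulVec A (lamExt H G b S A θ) (fun k hk => by simp [lamExt, hk])]
  congr 1
  funext k
  simp [lamExt, k.2]

lemma fVec_eq (A : Finset (Fin nc)) (j : Fin nc) :
    fVec H G A j = (H⁻¹ * Gᵀ).mulVec (dExt H G A j) := by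
  rw [fVec]
  apply ext_mulVec
  intro k hk
  have hk1 : k ∉ A := fun h => hk (Finset.mem_insert_of_mem h)
  have hk2 : k ≠ j := fun h => hk (h ▸ Finset.mem_insert_self j A)
  simp [dExt, hk1, hk2]

lemma zOf_insert (hH : H.PosDef) (A : Finset (Fin nc)) (j : Fin nc) (hj : j ∉ A)
    (hB : FullRowRank G (insert j A)) (θ : Fin n → ℝ) :
    zOf H G b S (insert j A) θ = zOf H G b S A θ +
      (cVal H G b A j + vVec H G S A j ⬝ᵥ θ) • fVec H G A j := by
  rw [zOf_eq, zOf_eq, fVec_eq, lamExt_insert hH A j hj hB θ, mulVec_sub, mulVec_smul]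
  funext a
  simp
  ring

/-- On the active set, the residual vanishes. -/
lemma resid_mem (hH : H.PosDef) (A : Finset (Fin nc)) (hA : FullRowRank G A)
    (θ : Fin n → ℝ) {k : Fin nc} (hk : k ∈ A) :
    G.mulVec (zOf H G b S A θ) k = b k + S.mulVec θ k := by
  have h1 : G.mulVec (zOf H G b S A θ) k =
      (subRows G A).mulVec (zOf H G b S A θ) ⟨k, hk⟩ := by
    simp [mulVec, subRows, dotProduct]
  rw [h1, zOf, mulVec_neg, mulVec_mulVec, ← Matrix.mul_assoc]
  have h2 : subRows G A * H⁻¹ * (subRows G A)ᵀ = Wmat H G A := rfl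
  rw [h2, Wmat_mulVec_lamOf hH A hA]
  simp

lemma telescope {α : Type*} [AddCommGroup α] : ∀ {K : ℕ} (g : Fin (K + 1) → α)
    (u : Fin K → α), (∀ l : Fin K, g l.succ = g l.castSucc + u l) →
    g (Fin.last K) = g 0 + ∑ l, u l := by
  intro K
  induction K with
  | zero => intro g u _; simp [Fin.last]
  | succ K ih =>
    intro g u h
    have h1 : g (Fin.last K).castSucc =
        g ((0 : Fin (K + 1)).castSucc) + ∑ l : Fin K, u l.castSucc :=
      ih (fun k => g k.castSucc) (fun l => u l.castSucc)
        (fun l => by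
          have := h l.castSucc
          rw [Fin.succ_castSucc] at this; exact this)
    have h2 : g (Fin.last (K + 1)) = g (Fin.last K).castSucc + u (Fin.last K) := by
      have := h (Fin.last K)
      simpa [Fin.succ_last] using this
    rw [h2, h1, Fin.sum_univ_castSucc, Fin.castSucc_zero, add_assoc]

/-- Theorem 3, feasibility part: along a path `A_0, …, A_K` of active sets,
(i) the primal residual and (ii) the extended dual solution at `A_K` are given
by accumulated rank-one updates of those at `A_0`; consequently the feasibility
conditions `G z_{A_K}(θ) ≤ b + Sθ ∧ λ_{A_K}(θ) ≥ 0` hold iff the componentwise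
inequalities built from the root data and the updates hold for `k ∉ A_K`
(primal) and `k ∈ A_K` (dual). -/
theorem feasibility_path_update
    {m n nc : ℕ} (H : Matrix (Fin m) (Fin m) ℝ) (hH : H.PosDef)
    (G : Matrix (Fin nc) (Fin m) ℝ) (b : Fin nc → ℝ) (S : Matrix (Fin nc) (Fin n) ℝ)
    (K : ℕ) (A : Fin (K + 1) → Finset (Fin nc)) (j : Fin K → Fin nc)
    (c : Fin K → ℝ) (v : Fin K → Fin n → ℝ) (f : Fin K → Fin m → ℝ)
    (d : Fin K → Fin nc → ℝ)
    (hrank : ∀ l : Fin (K + 1), FullRowRank G (A l))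
    (hstep : ∀ l : Fin K,
      (j l ∉ A l.castSucc ∧ A l.succ = insert (j l) (A l.castSucc) ∧
        c l = cVal H G b (A l.castSucc) (j l) ∧
        v l = vVec H G S (A l.castSucc) (j l) ∧
        f l = fVec H G (A l.castSucc) (j l) ∧
        d l = dExt H G (A l.castSucc) (j l)) ∨
      (j l ∈ A l.castSucc ∧ A l.succ = (A l.castSucc).erase (j l) ∧
        c l = cVal H G b (A l.succ) (j l) ∧
        v l = vVec H G S (A l.succ) (j l) ∧
        f l = -fVec H G (A l.succ) (j l) ∧
        d l = -dExt H G (A l.succ) (j l))) :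
    ∀ θ : Fin n → ℝ,
      (G.mulVec (zOf H G b S (A (Fin.last K)) θ) - b - S.mulVec θ =
        (G.mulVec (zOf H G b S (A 0) θ) - b - S.mulVec θ) +
          ∑ l : Fin K, (c l + v l ⬝ᵥ θ) • G.mulVec (f l)) ∧
      (lamExt H G b S (A (Fin.last K)) θ =
        lamExt H G b S (A 0) θ - ∑ l : Fin K, (c l + v l ⬝ᵥ θ) • d l) ∧
      ((G.mulVec (zOf H G b S (A (Fin.last K)) θ) ≤ b + S.mulVec θ ∧
          ∀ i : (A (Fin.last K) : Finset (Fin nc)),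
            0 ≤ lamOf H G b S (A (Fin.last K)) θ i) ↔
        ((∀ k, k ∉ A (Fin.last K) →
            (G.mulVec (zOf H G b S (A 0) θ) - b - S.mulVec θ) k +
                ∑ l : Fin K, G.mulVec (f l) k * (c l + v l ⬝ᵥ θ) ≤ 0) ∧
          (∀ k ∈ A (Fin.last K),
            -(lamExt H G b S (A 0) θ k) +
                ∑ l : Fin K, d l k * (c l + v l ⬝ᵥ θ) ≤ 0))) := by
  intro θ
  -- single-step updates
  have hstepz : ∀ l : Fin K, zOf H G b S (A l.succ) θ =
      zOf H G b S (A l.castSucc) θ + (c l + v l ⬝ᵥ θ) • f l := by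
    intro l
    rcases hstep l with ⟨hj, hins, hc, hv, hf, hd⟩ | ⟨hj, hers, hc, hv, hf, hd⟩
    · have hB : FullRowRank G (insert (j l) (A l.castSucc)) := hins ▸ hrank l.succ
      rw [hins, zOf_insert hH _ _ hj hB θ, hc, hv, hf]
    · have hj' : j l ∉ A l.succ := by rw [hers]; exact Finset.notMem_erase _ _
      have hins : insert (j l) (A l.succ) = A l.castSucc := by
        rw [hers]; exact Finset.insert_erase hj
      have hB : FullRowRank G (insert (j l) (A l.succ)) := hins ▸ hrank l.castSucc
      have hz := zOf_insert (b := b) (S := S) hH (A l.succ) (j l) hj' hB θ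
      rw [hins] at hz
      rw [hz, hc, hv, hf]
      funext a; simp
  have hstepl : ∀ l : Fin K, lamExt H G b S (A l.succ) θ =
      lamExt H G b S (A l.castSucc) θ + (-(c l + v l ⬝ᵥ θ)) • d l := by
    intro l
    rcases hstep l with ⟨hj, hins, hc, hv, hf, hd⟩ | ⟨hj, hers, hc, hv, hf, hd⟩
    · have hB : FullRowRank G (insert (j l) (A l.castSucc)) := hins ▸ hrank l.succ
      rw [hins, lamExt_insert hH _ _ hj hB θ, hc, hv, hd]
      funext k; simp; ring
    · have hj' : j l ∉ A l.succ := by rw [hers]; exact Finset.notMem_erase _ _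
      have hins : insert (j l) (A l.succ) = A l.castSucc := by
        rw [hers]; exact Finset.insert_erase hj
      have hB : FullRowRank G (insert (j l) (A l.succ)) := hins ▸ hrank l.castSucc
      have hl := lamExt_insert (b := b) (S := S) hH (A l.succ) (j l) hj' hB θ
      rw [hins] at hl
      rw [eq_sub_iff_add_eq] at hl
      rw [← hl, hc, hv, hd]
      funext k; simp; ring
  -- telescoping
  have hzK : zOf H G b S (A (Fin.last K)) θ =
      zOf H G b S (A 0) θ + ∑ l, (c l + v l ⬝ᵥ θ) • f l :=
    telescope (fun k => zOf H G b S (A k) θ)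
      (fun l => (c l + v l ⬝ᵥ θ) • f l) hstepz
  have hlK : lamExt H G b S (A (Fin.last K)) θ =
      lamExt H G b S (A 0) θ + ∑ l, (-(c l + v l ⬝ᵥ θ)) • d l :=
    telescope (fun k => lamExt H G b S (A k) θ)
      (fun l => (-(c l + v l ⬝ᵥ θ)) • d l) hstepl
  have hlK' : lamExt H G b S (A (Fin.last K)) θ =
      lamExt H G b S (A 0) θ - ∑ l, (c l + v l ⬝ᵥ θ) • d l := by
    have hneg : ∑ l : Fin K, (-(c l + v l ⬝ᵥ θ)) • d l =
        -∑ l : Fin K, (c l + v l ⬝ᵥ θ) • d l := by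
      rw [← Finset.sum_neg_distrib]
      exact Finset.sum_congr rfl fun l _ => neg_smul _ _
    rw [hlK, hneg, ← sub_eq_add_neg]
  have hGz : G.mulVec (zOf H G b S (A (Fin.last K)) θ) =
      G.mulVec (zOf H G b S (A 0) θ) +
        ∑ l, (c l + v l ⬝ᵥ θ) • G.mulVec (f l) := by
    rw [hzK]
    simp only [← mulVecLin_apply, map_add, map_sum, _root_.map_smul]
  refine ⟨?_, ?_, ?_⟩
  · rw [hGz]; abel
  · exact hlK'
  · have hresid : ∀ k : Fin nc,
        (G.mulVec (zOf H G b S (A (Fin.last K)) θ) - b - S.mulVec θ) k =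
          (G.mulVec (zOf H G b S (A 0) θ) - b - S.mulVec θ) k +
            ∑ l, G.mulVec (f l) k * (c l + v l ⬝ᵥ θ) := by
      intro k
      simp only [Pi.sub_apply, hGz, Pi.add_apply, Finset.sum_apply, Pi.smul_apply,
        smul_eq_mul]
      rw [Finset.sum_congr rfl (fun l _ => mul_comm ((c l + v l ⬝ᵥ θ)) (G.mulVec (f l) k))]
      ring
    have hlamk : ∀ k : Fin nc,
        lamExt H G b S (A (Fin.last K)) θ k =
          lamExt H G b S (A 0) θ k - ∑ l, d l k * (c l + v l ⬝ᵥ θ) := by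
      intro k
      rw [hlK']
      simp only [Pi.sub_apply, Finset.sum_apply, Pi.smul_apply, smul_eq_mul]
      rw [Finset.sum_congr rfl (fun l _ => mul_comm ((c l + v l ⬝ᵥ θ)) (d l k))]
    constructor
    · rintro ⟨hfeas, hdual⟩
      constructor
      · intro k hk
        rw [← hresid k]
        have h1 := hfeas k
        simp only [Pi.add_apply] at h1
        simp only [Pi.sub_apply]
        linarith
      · intro k hk
        have h0 : 0 ≤ lamExt H G b S (A (Fin.last K)) θ k := by
          rw [lamExt, dif_pos hk]; exact hdual ⟨k, hk⟩
        rw [hlamk k] at h0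
        linarith
    · rintro ⟨hp, hd⟩
      constructor
      · intro k
        by_cases hk : k ∈ A (Fin.last K)
        · rw [resid_mem hH _ (hrank (Fin.last K)) θ hk]
          simp
        · have := hp k hk
          rw [← hresid k] at this
          simp only [Pi.sub_apply] at this
          simp only [Pi.add_apply]
          linarith
      · intro i
        have hi := hd i.val i.2
        have h0 : 0 ≤ lamExt H G b S (A (Fin.last K)) θ i.val := by
          rw [hlamk i.val]
          linarith
        rw [lamExt, dif_pos i.2] at h0
        simpa using h0

end MpQP
end
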